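/- Let 1 ≤ ℓ < k ≤ n/2. For i = 0,…,k one has |θ_i^{k,k} a(0)| = ½ q^{binom(i,2)+ℓ−ik} ((q^{k−ℓ}−1)/(q^k−1)) [n−k−i choose k−i]_q [n−k choose k]_q^{−1} [n−1 choose k−1]_q^{1/2} [n−1 choose ℓ−1]_q^{1/2}; moreover |θ_i^{k,k} a(0)| < ½ [n−1 choose k−1]_q^{1/2} [n−1 choose ℓ−1]_q^{1/2} for i = 0, 1, and |θ_i^{k,k} a(0)| < (1/(2q)) [n−1 choose k−1]_q^{1/2} [n−1 choose ℓ−1]_q^{1/2} for i = 2,…,k. -/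

import Mathlib

/-- The Gaussian binomial coefficient `[a choose b]_q`, as a real number:
`∏_{i=0}^{b-1} (q^(a-i)-1)/(q^(b-i)-1)` for `a, b ≥ 0`, and `0` if `a < 0` or `b < 0`. -/
noncomputable def gbinom (q : ℝ) (a b : ℤ) : ℝ :=
  if 0 ≤ a ∧ 0 ≤ b then
    ∏ i ∈ Finset.range b.toNat, (q ^ (a - i) - 1) / (q ^ (b - i) - 1)
  else 0

/-- The eigenvalue
`θ_i^{k,ℓ} = (-1)^i q^{C(i,2) + kℓ - i(k+ℓ)/2} [n-k-i choose ℓ-i] [n-2i choose k-i]^{1/2}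
[n-2i choose ℓ-i]^{-1/2}` for `i ≤ k ≤ n - i`, and `0` if `k < i` or `k > n - i`.
(The half-integer power of `q` is expressed via `√q`.) -/
noncomputable def theta (q : ℝ) (n i k l : ℕ) : ℝ :=
  if i ≤ k ∧ k ≤ n - i then
    (-1) ^ i * (Real.sqrt q) ^ ((i * (i - 1) : ℤ) + 2 * k * l - i * (k + l)) *
      gbinom q ((n : ℤ) - k - i) ((l : ℤ) - i) *
      Real.sqrt (gbinom q ((n : ℤ) - 2 * i) ((k : ℤ) - i)) *
      (Real.sqrt (gbinom q ((n : ℤ) - 2 * i) ((l : ℤ) - i)))⁻¹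
  else 0

/-- `a(λ)`, defined by
`q^{k²}(q^k-1)[n-k choose k] a(λ) = ½ q^ℓ (q^{k-ℓ}-1)[n-1 choose k-1]^{1/2}[n-1 choose ℓ-1]^{1/2}
+ q^{ℓ²}(q^ℓ-1)[n-ℓ choose ℓ] λ`. -/
noncomputable def aF (q : ℝ) (n k l : ℕ) (lam : ℝ) : ℝ :=
  ((1 / 2) * q ^ l * (q ^ ((k : ℤ) - l) - 1) *
      Real.sqrt (gbinom q ((n : ℤ) - 1) ((k : ℤ) - 1)) *
      Real.sqrt (gbinom q ((n : ℤ) - 1) ((l : ℤ) - 1)) +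
    q ^ (l ^ 2) * (q ^ l - 1) * gbinom q ((n : ℤ) - l) l * lam) /
  (q ^ (k ^ 2) * (q ^ k - 1) * gbinom q ((n : ℤ) - k) k)

lemma gbinom_pos {q : ℝ} (hq : 1 < q) {a b : ℤ} (hb : 0 ≤ b) (hab : b ≤ a) :
    0 < gbinom q a b := by
  rw [gbinom, if_pos ⟨hb.trans hab, hb⟩]
  apply Finset.prod_pos
  intro i hi
  rw [Finset.mem_range] at hi
  have hib : (i:ℤ) < b := by omega
  apply div_pos <;> (rw [sub_pos]; exact one_lt_zpow₀ hq (by omega))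

lemma gbinom_step {q : ℝ} {a b : ℤ} (ha : 1 ≤ a) (hb : 1 ≤ b) :
    gbinom q a b = (q^a - 1)/(q^b - 1) * gbinom q (a-1) (b-1) := by
  rw [gbinom, gbinom, if_pos ⟨by omega, by omega⟩, if_pos ⟨by omega, by omega⟩]
  have h : b.toNat = (b-1).toNat + 1 := by omega
  rw [h, Finset.prod_range_succ', mul_comm]
  congr 1
  · norm_num
  · apply Finset.prod_congr rfl
    intro i _
    congr 2 <;> push_cast <;> ring

lemma gbinom_chain {q : ℝ} (hq : 1 < q) {n k : ℤ} (hn : 2*k ≤ n) :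
    ∀ i : ℕ, (i:ℤ) ≤ k → gbinom q (n-k-i) (k-i) ≤ gbinom q (n-k) k := by
  intro i
  induction i with
  | zero => simp
  | succ m ih =>
    intro hm
    have hm' : (m:ℤ) ≤ k := by push_cast at hm ⊢; omega
    refine le_trans ?_ (ih hm')
    have hstep := gbinom_step (q := q) (a := n-k-m) (b := k-m) (by push_cast at hm; omega) (by push_cast at hm; omega)
    rw [hstep]
    have h1 : gbinom q (n-k-m-1) (k-m-1) ≤ (q^((n:ℤ)-k-m) - 1)/(q^((k:ℤ)-m) - 1) * gbinom q (n-k-m-1) (k-m-1) := by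
      apply le_mul_of_one_le_left
      · exact (gbinom_pos hq (by push_cast at hm; omega) (by push_cast at hm; omega)).le
      · rw [le_div_iff₀ (by rw [sub_pos]; exact one_lt_zpow₀ hq (by push_cast at hm; omega))]
        rw [one_mul]
        have := zpow_le_zpow_right₀ hq.le (show (k:ℤ)-m ≤ n-k-m by omega)
        linarith
    refine le_trans (le_of_eq ?_) h1
    congr 1 <;> push_cast <;> ring

lemma two_mul_choose_two (i : ℕ) : 2 * i.choose 2 = i * (i-1) := by
  induction i with
  | zero => rfl
  | succ m ih =>
    rw [Nat.choose_succ_succ, Nat.choose_one_right]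
    cases m with
    | zero => rfl
    | succ p =>
      simp only [Nat.add_sub_cancel] at *
      ring_nf at ih ⊢
      omega

lemma main_eq {Q : ℝ} (hQ : 1 < Q) {n k l i : ℕ} (hl1 : 1 ≤ l) (hlk : l < k)
    (hkn : 2*k ≤ n) (hik : i ≤ k) :
    theta Q n i k k * aF Q n k l 0 =
      (-1)^i * ((1 / 2) * Q ^ ((i.choose 2 : ℤ) + (l : ℤ) - i * k) *
          ((Q ^ ((k : ℤ) - l) - 1) / (Q ^ (k : ℕ) - 1)) *
          gbinom Q ((n : ℤ) - k - i) ((k : ℤ) - i) *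
          (gbinom Q ((n : ℤ) - k) (k : ℤ))⁻¹ *
          Real.sqrt (gbinom Q ((n : ℤ) - 1) ((k : ℤ) - 1)) *
          Real.sqrt (gbinom Q ((n : ℤ) - 1) ((l : ℤ) - 1))) := by
  have hQ0 : (0:ℝ) < Q := by linarith
  have hcond : i ≤ k ∧ k ≤ n - i := ⟨hik, by omega⟩
  rw [theta, aF, if_pos hcond]
  simp only [mul_zero, add_zero]
  set M : ℤ := (i.choose 2 : ℤ) + k * k - i * k with hM
  have h2 : 2 * ((i.choose 2 : ℕ):ℤ) = (i:ℤ) * ((i:ℤ) - 1) := by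
    cases i with
    | zero => simp
    | succ m =>
      have h := two_mul_choose_two (m+1)
      simp only [Nat.add_sub_cancel] at h
      have h' : (2:ℤ) * ((m+1).choose 2 : ℕ) = ((m+1):ℤ) * m := by exact_mod_cast h
      push_cast at h' ⊢
      linarith
  have hE : ((i:ℤ) * ((i:ℤ) - 1) + 2 * k * k - i * (k + k)) = 2 * M := by
    rw [hM]; linear_combination -h2
  have hsq : (Real.sqrt Q) ^ ((i * (i - 1) : ℤ) + 2 * k * k - i * (k + k)) = Q ^ M := by
    rw [hE, zpow_mul, zpow_two, Real.mul_self_sqrt hQ0.le]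
  rw [hsq]
  have hCpos : 0 < gbinom Q ((n:ℤ) - 2*i) ((k:ℤ) - i) := gbinom_pos hQ (by omega) (by omega)
  have hG : 0 < gbinom Q ((n:ℤ) - k) k := gbinom_pos hQ (by omega) (by omega)
  have hY : (0:ℝ) < Q^k - 1 := sub_pos.2 (one_lt_pow₀ hQ (by omega))
  have hsC : Real.sqrt (gbinom Q ((n:ℤ) - 2*i) ((k:ℤ) - i)) ≠ 0 :=
    (Real.sqrt_pos.2 hCpos).ne'
  have hpow : Q^M * Q^l = Q^((i.choose 2:ℤ) + (l:ℤ) - i*k) * Q^(k^2) := by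
    rw [← zpow_natCast Q l, ← zpow_natCast Q (k^2), ← zpow_add₀ hQ0.ne', ← zpow_add₀ hQ0.ne', hM]
    congr 1
    push_cast
    ring
  field_simp
  linear_combination (gbinom Q ((n:ℤ)-k-i) ((k:ℤ)-i) *
    Real.sqrt (gbinom Q ((n:ℤ)-1) ((k:ℤ)-1)) * Real.sqrt (gbinom Q ((n:ℤ)-1) ((l:ℤ)-1)) *
    (Q^((k:ℤ)-l) - 1)) * hpow

/-- **Evaluation of `|θ_i^{k,k} a(0)|` (display (5) of the paper).** For `1 ≤ ℓ < k ≤ n/2`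
and `0 ≤ i ≤ k`:
`|θ_i^{k,k} a(0)| = ½ q^{C(i,2)+ℓ-ik} ((q^{k-ℓ}-1)/(q^k-1)) [n-k-i choose k-i][n-k choose k]⁻¹
 [n-1 choose k-1]^{1/2}[n-1 choose ℓ-1]^{1/2}`,
and this is `< ½ [n-1 choose k-1]^{1/2}[n-1 choose ℓ-1]^{1/2}` for `i = 0, 1` and
`< (1/2q) [n-1 choose k-1]^{1/2}[n-1 choose ℓ-1]^{1/2}` for `i = 2, …, k`. -/
theorem abs_theta_mul_a_zero
    (q n k l : ℕ) (hq : IsPrimePow q)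
    (hl1 : 1 ≤ l) (hlk : l < k) (hkn : 2 * k ≤ n) :
    (∀ i : ℕ, i ≤ k →
      |theta (q : ℝ) n i k k * aF (q : ℝ) n k l 0| =
        (1 / 2) * (q : ℝ) ^ ((i.choose 2 : ℤ) + (l : ℤ) - i * k) *
          (((q : ℝ) ^ ((k : ℤ) - l) - 1) / ((q : ℝ) ^ (k : ℕ) - 1)) *
          gbinom (q : ℝ) ((n : ℤ) - k - i) ((k : ℤ) - i) *
          (gbinom (q : ℝ) ((n : ℤ) - k) (k : ℤ))⁻¹ *
          Real.sqrt (gbinom (q : ℝ) ((n : ℤ) - 1) ((k : ℤ) - 1)) *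
          Real.sqrt (gbinom (q : ℝ) ((n : ℤ) - 1) ((l : ℤ) - 1))) ∧
    (∀ i : ℕ, i ≤ 1 →
      |theta (q : ℝ) n i k k * aF (q : ℝ) n k l 0| <
        (1 / 2) * Real.sqrt (gbinom (q : ℝ) ((n : ℤ) - 1) ((k : ℤ) - 1)) *
          Real.sqrt (gbinom (q : ℝ) ((n : ℤ) - 1) ((l : ℤ) - 1))) ∧
    (∀ i : ℕ, 2 ≤ i → i ≤ k →
      |theta (q : ℝ) n i k k * aF (q : ℝ) n k l 0| <
        (1 / (2 * q)) * Real.sqrt (gbinom (q : ℝ) ((n : ℤ) - 1) ((k : ℤ) - 1)) *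
          Real.sqrt (gbinom (q : ℝ) ((n : ℤ) - 1) ((l : ℤ) - 1))) := by
  set Q : ℝ := (q : ℝ) with hQdef
  have hq2 : 2 ≤ q := hq.two_le
  have hQ : 1 < Q := by rw [hQdef]; exact_mod_cast Nat.lt_of_lt_of_le one_lt_two hq2
  have hQ0 : (0:ℝ) < Q := lt_trans one_pos hQ
  have hBk : 0 < gbinom Q ((n:ℤ) - 1) ((k:ℤ) - 1) := gbinom_pos hQ (by omega) (by omega)
  have hBl : 0 < gbinom Q ((n:ℤ) - 1) ((l:ℤ) - 1) := gbinom_pos hQ (by omega) (by omega)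
  have hD : 0 < Real.sqrt (gbinom Q ((n:ℤ) - 1) ((k:ℤ) - 1)) *
      Real.sqrt (gbinom Q ((n:ℤ) - 1) ((l:ℤ) - 1)) :=
    mul_pos (Real.sqrt_pos.2 hBk) (Real.sqrt_pos.2 hBl)
  have hY : (0:ℝ) < Q ^ k - 1 := sub_pos.2 (one_lt_pow₀ hQ (by omega))
  have hX : (0:ℝ) < Q ^ ((k:ℤ) - l) - 1 := sub_pos.2 (one_lt_zpow₀ hQ (by omega))
  -- the main equality
  have key : ∀ i : ℕ, i ≤ k →
      |theta Q n i k k * aF Q n k l 0| =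
        (1 / 2) * Q ^ ((i.choose 2 : ℤ) + (l : ℤ) - i * k) *
          ((Q ^ ((k : ℤ) - l) - 1) / (Q ^ (k : ℕ) - 1)) *
          gbinom Q ((n : ℤ) - k - i) ((k : ℤ) - i) *
          (gbinom Q ((n : ℤ) - k) (k : ℤ))⁻¹ *
          Real.sqrt (gbinom Q ((n : ℤ) - 1) ((k : ℤ) - 1)) *
          Real.sqrt (gbinom Q ((n : ℤ) - 1) ((l : ℤ) - 1)) := by
    intro i hik
    rw [main_eq hQ hl1 hlk hkn hik, abs_mul, abs_pow, abs_neg, abs_one, one_pow, one_mul]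
    have hA : 0 < gbinom Q ((n:ℤ) - k - i) ((k:ℤ) - i) := gbinom_pos hQ (by omega) (by omega)
    have hG : 0 < gbinom Q ((n:ℤ) - k) k := gbinom_pos hQ (by omega) (by omega)
    apply abs_of_nonneg
    have h1 : (0:ℝ) < Q ^ ((i.choose 2 : ℤ) + (l : ℤ) - i * k) := zpow_pos hQ0 _
    have h2 : (0:ℝ) ≤ (Q ^ ((k : ℤ) - l) - 1) / (Q ^ (k : ℕ) - 1) := (div_pos hX hY).le
    refine mul_nonneg (mul_nonneg (mul_nonneg (mul_nonneg (mul_nonneg ?_ h2) hA.le)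
      (inv_pos.2 hG).le) (Real.sqrt_nonneg _)) (Real.sqrt_nonneg _)
    positivity
  -- the local bound T < Q^(C(i,2) - i k)
  have hT : ∀ i : ℕ, i ≤ k →
      Q ^ ((i.choose 2 : ℤ) + (l : ℤ) - i * k) *
        ((Q ^ ((k : ℤ) - l) - 1) / (Q ^ (k : ℕ) - 1)) *
        gbinom Q ((n : ℤ) - k - i) ((k : ℤ) - i) *
        (gbinom Q ((n : ℤ) - k) (k : ℤ))⁻¹ < Q ^ ((i.choose 2 : ℤ) - i * k) := by
    intro i hik
    have hA : 0 < gbinom Q ((n:ℤ) - k - i) ((k:ℤ) - i) := gbinom_pos hQ (by omega) (by omega)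
    have hG : 0 < gbinom Q ((n:ℤ) - k) k := gbinom_pos hQ (by omega) (by omega)
    have hAG : gbinom Q ((n:ℤ) - k - i) ((k:ℤ) - i) * (gbinom Q ((n:ℤ) - k) k)⁻¹ ≤ 1 := by
      rw [← div_eq_mul_inv, div_le_one hG]
      have := gbinom_chain hQ (n := n) (k := k) (by omega) i (by omega)
      exact this
    have hAG0 : 0 < gbinom Q ((n:ℤ) - k - i) ((k:ℤ) - i) * (gbinom Q ((n:ℤ) - k) k)⁻¹ :=
      mul_pos hA (inv_pos.2 hG)
    have h5 : Q ^ ((i.choose 2 : ℤ) + (l : ℤ) - i * k) *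
        ((Q ^ ((k : ℤ) - l) - 1) / (Q ^ (k : ℕ) - 1)) < Q ^ ((i.choose 2 : ℤ) - i * k) := by
      rw [mul_div_assoc', div_lt_iff₀ hY]
      have e1 : Q ^ ((i.choose 2 : ℤ) + (l : ℤ) - i * k) * (Q ^ ((k : ℤ) - l) - 1) =
          Q ^ ((i.choose 2 : ℤ) - i * k) * (Q ^ ((k:ℤ)) - Q ^ ((l:ℤ))) := by
        rw [mul_sub, mul_one, mul_sub, ← zpow_add₀ hQ0.ne', ← zpow_add₀ hQ0.ne',
          ← zpow_add₀ hQ0.ne']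
        congr 1 <;> · congr 1; ring
      rw [e1]
      have e2 : Q ^ (k:ℕ) = Q ^ ((k:ℤ)) := (zpow_natCast Q k).symm
      rw [e2]
      have h6 : Q ^ ((l:ℤ)) > 1 := one_lt_zpow₀ hQ (by omega)
      have h7 : (0:ℝ) < Q ^ ((i.choose 2 : ℤ) - i * k) := zpow_pos hQ0 _
      nlinarith
    calc Q ^ ((i.choose 2 : ℤ) + (l : ℤ) - i * k) *
          ((Q ^ ((k : ℤ) - l) - 1) / (Q ^ (k : ℕ) - 1)) *
          gbinom Q ((n : ℤ) - k - i) ((k : ℤ) - i) * (gbinom Q ((n : ℤ) - k) (k : ℤ))⁻¹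
        = (Q ^ ((i.choose 2 : ℤ) + (l : ℤ) - i * k) *
            ((Q ^ ((k : ℤ) - l) - 1) / (Q ^ (k : ℕ) - 1))) *
          (gbinom Q ((n : ℤ) - k - i) ((k : ℤ) - i) * (gbinom Q ((n : ℤ) - k) (k : ℤ))⁻¹) := by
          ring
      _ ≤ (Q ^ ((i.choose 2 : ℤ) + (l : ℤ) - i * k) *
            ((Q ^ ((k : ℤ) - l) - 1) / (Q ^ (k : ℕ) - 1))) * 1 := by
          apply mul_le_mul_of_nonneg_left hAG
          positivity
      _ = Q ^ ((i.choose 2 : ℤ) + (l : ℤ) - i * k) *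
            ((Q ^ ((k : ℤ) - l) - 1) / (Q ^ (k : ℕ) - 1)) := mul_one _
      _ < Q ^ ((i.choose 2 : ℤ) - i * k) := h5
  refine ⟨key, ?_, ?_⟩
  · intro i hi1
    have hik : i ≤ k := by omega
    rw [key i hik]
    have hP1 : Q ^ ((i.choose 2 : ℤ) - i * k) ≤ 1 := by
      apply zpow_le_one_of_nonpos₀ hQ.le
      have : i.choose 2 = 0 := by interval_cases i <;> rfl
      rw [this]
      have hnn : (0:ℤ) ≤ (i:ℤ) * k := by positivity
      push_cast
      omega
    have hT' := (hT i hik).trans_le hP1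
    calc (1 / 2) * Q ^ ((i.choose 2 : ℤ) + (l : ℤ) - i * k) *
          ((Q ^ ((k : ℤ) - l) - 1) / (Q ^ (k : ℕ) - 1)) *
          gbinom Q ((n : ℤ) - k - i) ((k : ℤ) - i) *
          (gbinom Q ((n : ℤ) - k) (k : ℤ))⁻¹ *
          Real.sqrt (gbinom Q ((n : ℤ) - 1) ((k : ℤ) - 1)) *
          Real.sqrt (gbinom Q ((n : ℤ) - 1) ((l : ℤ) - 1))
        = (1 / 2) * (Q ^ ((i.choose 2 : ℤ) + (l : ℤ) - i * k) *
            ((Q ^ ((k : ℤ) - l) - 1) / (Q ^ (k : ℕ) - 1)) *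
            gbinom Q ((n : ℤ) - k - i) ((k : ℤ) - i) *
            (gbinom Q ((n : ℤ) - k) (k : ℤ))⁻¹) *
          (Real.sqrt (gbinom Q ((n : ℤ) - 1) ((k : ℤ) - 1)) *
            Real.sqrt (gbinom Q ((n : ℤ) - 1) ((l : ℤ) - 1))) := by ring
      _ < (1 / 2) * 1 *
          (Real.sqrt (gbinom Q ((n : ℤ) - 1) ((k : ℤ) - 1)) *
            Real.sqrt (gbinom Q ((n : ℤ) - 1) ((l : ℤ) - 1))) := by
          apply mul_lt_mul_of_pos_right _ hD
          apply mul_lt_mul_of_pos_left hT' (by norm_num)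
      _ = (1 / 2) * Real.sqrt (gbinom Q ((n : ℤ) - 1) ((k : ℤ) - 1)) *
            Real.sqrt (gbinom Q ((n : ℤ) - 1) ((l : ℤ) - 1)) := by ring
  · intro i hi2 hik
    rw [key i hik]
    have hP1 : Q ^ ((i.choose 2 : ℤ) - i * k) ≤ Q⁻¹ := by
      rw [← zpow_neg_one]
      apply zpow_le_zpow_right₀ hQ.le
      have h2c : 2 * ((i.choose 2 : ℕ):ℤ) = (i:ℤ) * ((i:ℤ) - 1) := by
        have h := two_mul_choose_two i
        have h' : (i:ℤ) * (((i:ℕ) - 1 : ℕ):ℤ) = 2 * ((i.choose 2 : ℕ):ℤ) := by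
          exact_mod_cast congrArg (Nat.cast : ℕ → ℤ) h.symm
        rw [← h']
        have : (((i:ℕ) - 1 : ℕ):ℤ) = (i:ℤ) - 1 := by omega
        rw [this]
      have hik' : (i:ℤ) ≤ k := by exact_mod_cast hik
      have hi2' : (2:ℤ) ≤ i := by exact_mod_cast hi2
      nlinarith [mul_le_mul_of_nonneg_left hik' (by linarith : (0:ℤ) ≤ (i:ℤ))]
    have hT' := (hT i hik).trans_le hP1
    calc (1 / 2) * Q ^ ((i.choose 2 : ℤ) + (l : ℤ) - i * k) *
          ((Q ^ ((k : ℤ) - l) - 1) / (Q ^ (k : ℕ) - 1)) *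
          gbinom Q ((n : ℤ) - k - i) ((k : ℤ) - i) *
          (gbinom Q ((n : ℤ) - k) (k : ℤ))⁻¹ *
          Real.sqrt (gbinom Q ((n : ℤ) - 1) ((k : ℤ) - 1)) *
          Real.sqrt (gbinom Q ((n : ℤ) - 1) ((l : ℤ) - 1))
        = (1 / 2) * (Q ^ ((i.choose 2 : ℤ) + (l : ℤ) - i * k) *
            ((Q ^ ((k : ℤ) - l) - 1) / (Q ^ (k : ℕ) - 1)) *
            gbinom Q ((n : ℤ) - k - i) ((k : ℤ) - i) *
            (gbinom Q ((n : ℤ) - k) (k : ℤ))⁻¹) *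
          (Real.sqrt (gbinom Q ((n : ℤ) - 1) ((k : ℤ) - 1)) *
            Real.sqrt (gbinom Q ((n : ℤ) - 1) ((l : ℤ) - 1))) := by ring
      _ < (1 / 2) * Q⁻¹ *
          (Real.sqrt (gbinom Q ((n : ℤ) - 1) ((k : ℤ) - 1)) *
            Real.sqrt (gbinom Q ((n : ℤ) - 1) ((l : ℤ) - 1))) := by
          apply mul_lt_mul_of_pos_right _ hD
          apply mul_lt_mul_of_pos_left hT' (by norm_num)
      _ = (1 / (2 * Q)) * Real.sqrt (gbinom Q ((n : ℤ) - 1) ((k : ℤ) - 1)) *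
            Real.sqrt (gbinom Q ((n : ℤ) - 1) ((l : ℤ) - 1)) := by
          field_simp
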